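/- For every α > 2, there exists a unique Λ* > 0 satisfying α/2 = (1 + Λ*^{α/2}) · log(1 + Λ*^{-α/2}). -/

import Mathlib

open Real

noncomputable def fLam (t : ℝ) : ℝ := (1 + t) * Real.log (1 + t⁻¹)

lemma fLam_hasDerivAt {t : ℝ} (ht : 0 < t) :
    HasDerivAt fLam (Real.log (1 + t⁻¹) - 1 / t) t := by
  have ht0 : t ≠ 0 := ht.ne'
  have hpos : 0 < 1 + t⁻¹ := by positivity
  have h1 : HasDerivAt (fun x : ℝ => 1 + x⁻¹) (-(t ^ 2)⁻¹) t :=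
    (hasDerivAt_inv ht0).const_add 1
  have h2 : HasDerivAt (fun x : ℝ => Real.log (1 + x⁻¹))
      (-(t ^ 2)⁻¹ / (1 + t⁻¹)) t := h1.log hpos.ne'
  have h3 : HasDerivAt (fun x : ℝ => 1 + x) 1 t := (hasDerivAt_id t).const_add 1
  have h4 := h3.mul h2
  convert h4 using 1
  · rfl
  · rfl
  · rfl
  field_simp
  ring

lemma fLam_strictAntiOn : StrictAntiOn fLam (Set.Ioi 0) := by
  apply strictAntiOn_of_deriv_neg (convex_Ioi 0)
  · exact fun x hx => (fLam_hasDerivAt hx).continuousAt.continuousWithinAt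
  · intro x hx
    rw [interior_Ioi] at hx
    have hx' : (0:ℝ) < x := hx
    rw [(fLam_hasDerivAt hx').deriv]
    have h1 : Real.log (1 + x⁻¹) < (1 + x⁻¹) - 1 := by
      apply Real.log_lt_sub_one_of_pos (by positivity)
      have : 0 < x⁻¹ := by positivity
      linarith
    rw [one_div]
    linarith

theorem unique_Lambda_star (α : ℝ) (hα : 2 < α) :
    ∃! Λ : ℝ, 0 < Λ ∧ α / 2 = (1 + Λ ^ (α / 2)) * Real.log (1 + Λ ^ (-(α / 2))) := by
  have hα0 : (0:ℝ) < α := by linarith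
  have hα2 : (0:ℝ) < α / 2 := by linarith
  -- pick endpoints
  set a : ℝ := (Real.exp (α / 2) - 1)⁻¹ with ha_def
  set b : ℝ := 2 / (α - 2) with hb_def
  have hexp : 1 < Real.exp (α / 2) := by
    rw [← Real.exp_zero]; exact Real.exp_lt_exp.mpr hα2
  have ha : 0 < a := by
    apply inv_pos.mpr; linarith
  have hb : 0 < b := by
    apply div_pos two_pos; linarith
  have hfa : α / 2 < fLam a := by
    have hainv : a⁻¹ = Real.exp (α / 2) - 1 := by
      rw [ha_def, inv_inv]
    have : fLam a = (1 + a) * (α / 2) := by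
      rw [fLam, hainv]
      have : 1 + (Real.exp (α / 2) - 1) = Real.exp (α / 2) := by ring
      rw [this, Real.log_exp]
    rw [this]
    nlinarith
  have hfb : fLam b < α / 2 := by
    have hbinv : b⁻¹ = (α - 2) / 2 := by
      rw [hb_def]; field_simp
    have hlog : Real.log (1 + b⁻¹) < b⁻¹ := by
      have h1 : Real.log (1 + b⁻¹) < (1 + b⁻¹) - 1 := by
        apply Real.log_lt_sub_one_of_pos (by positivity)
        have : 0 < b⁻¹ := by positivity
        linarith
      linarith
    have hlb : fLam b < (1 + b) * b⁻¹ := by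
      rw [fLam]
      apply mul_lt_mul_of_pos_left hlog (by positivity)
    have : (1 + b) * b⁻¹ = b⁻¹ + 1 := by
      field_simp
    rw [this, hbinv] at hlb
    linarith
  have hab : a ≤ b := by
    by_contra h
    push_neg at h
    have := fLam_strictAntiOn (Set.mem_Ioi.mpr hb) (Set.mem_Ioi.mpr ha) h
    linarith
  -- intermediate value
  have hcont : ContinuousOn fLam (Set.Icc a b) := by
    intro x hx
    have hx0 : 0 < x := lt_of_lt_of_le ha hx.1
    exact (fLam_hasDerivAt hx0).continuousAt.continuousWithinAt
  have hmem : α / 2 ∈ Set.Icc (fLam b) (fLam a) := ⟨hfb.le, hfa.le⟩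
  obtain ⟨t, htab, htval⟩ := intermediate_value_Icc' hab hcont hmem
  have ht : 0 < t := lt_of_lt_of_le ha htab.1
  -- translate to Λ
  have hαne : α ≠ 0 := hα0.ne'
  refine ⟨t ^ (2 / α), ⟨Real.rpow_pos_of_pos ht _, ?_⟩, ?_⟩
  · have h1 : (t ^ (2 / α)) ^ (α / 2) = t := by
      rw [← Real.rpow_mul ht.le,
        show 2 / α * (α / 2) = 1 by field_simp, Real.rpow_one]
    have h2 : (t ^ (2 / α)) ^ (-(α / 2)) = t⁻¹ := by
      rw [Real.rpow_neg (Real.rpow_pos_of_pos ht _).le, h1]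
    rw [h1, h2, ← fLam, htval]
  · rintro Λ' ⟨hΛ', heq⟩
    set t' := Λ' ^ (α / 2) with ht'_def
    have ht'pos : 0 < t' := Real.rpow_pos_of_pos hΛ' _
    have hinv : Λ' ^ (-(α / 2)) = t'⁻¹ := Real.rpow_neg hΛ'.le _
    have hft' : fLam t' = α / 2 := by
      rw [fLam, ← hinv, ht'_def, ← heq]
    have htt : t' = t :=
      fLam_strictAntiOn.injOn (Set.mem_Ioi.mpr ht'pos) (Set.mem_Ioi.mpr ht)
        (by rw [hft', htval])
    have : t' ^ (2 / α) = Λ' := by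
      rw [ht'_def, ← Real.rpow_mul hΛ'.le]
      rw [show α / 2 * (2 / α) = 1 by field_simp, Real.rpow_one]
    rw [← this, htt]
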